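/- The cochain DG algebra B(s,t) with underlying graded algebra k⟨x₁,x₂⟩ (generators in degree 1) and differential given by ∂(x₁) = (1+s−st)x₁² + x₁x₂ + x₂x₁ + (1/s)x₂² and ∂(x₂) = sx₁² + x₁x₂ + x₂x₁ + tx₂², where s ∈ k^×, t ∈ k and st ≠ 1, has trivial cohomology: H⁰ = k and Hⁱ = 0 for all i ≥ 1. -/

import Mathlib

/-- The degree-`i` homogeneous component of the free algebra `k⟨x_1,...,x_n⟩`
with all generators in degree `1`: the span of the words of length `i`. -/
noncomputable def deg (k : Type*) [CommRing k] (n : ℕ) (i : ℕ) :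
    Submodule k (FreeAlgebra k (Fin n)) :=
  Submodule.span k
    {w | ∃ f : Fin i → Fin n, w = (List.ofFn fun j => FreeAlgebra.ι k (f j)).prod}

lemma phi_iota {k : Type*} [Field k] (x : Fin 2) :
    FreeAlgebra.equivMonoidAlgebraFreeMonoid (FreeAlgebra.ι k x)
      = MonoidAlgebra.single (FreeMonoid.of x) 1 := by
  simp [FreeAlgebra.equivMonoidAlgebraFreeMonoid, MonoidAlgebra.of_apply]

lemma left_cancel2 {k : Type*} [Field k] (u v : FreeAlgebra k (Fin 2))
    (h : FreeAlgebra.ι k 0 * u + FreeAlgebra.ι k 1 * v = 0) : u = 0 ∧ v = 0 := by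
  set φ := FreeAlgebra.equivMonoidAlgebraFreeMonoid (R := k) (X := Fin 2)
  have key : ∀ (i j : Fin 2) (a b : FreeAlgebra k (Fin 2)), i ≠ j →
      FreeAlgebra.ι k i * a + FreeAlgebra.ι k j * b = 0 → a = 0 := by
    intro i j a b hij hab
    have h0 : φ (FreeAlgebra.ι k i * a + FreeAlgebra.ι k j * b) = 0 := by rw [hab]; simp
    rw [map_add, map_mul, map_mul, phi_iota, phi_iota] at h0
    have ha : φ a = 0 := by
      ext w
      have := congrArg (fun f : MonoidAlgebra k (FreeMonoid (Fin 2)) =>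
        f.coeff (FreeMonoid.of i * w)) h0
      beta_reduce at this
      erw [MonoidAlgebra.coeff_add, Finsupp.add_apply] at this
      rw [MonoidAlgebra.coeff_single_mul_eq_mul_coeff (x := φ a)
        (m := FreeMonoid.of i) (m₁ := FreeMonoid.of i * w) (m₂ := w)
        (fun a _ => mul_left_cancel_iff)] at this
      rw [MonoidAlgebra.single_mul_apply_of_not_exists_mul (1:k) (φ b)
        (g := FreeMonoid.of j) (g' := FreeMonoid.of i * w) ?_] at this
      · simpa using this
      · rintro ⟨dd, hdd⟩
        have := congrArg FreeMonoid.toList hdd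
        simp [FreeMonoid.toList_of] at this
        exact hij this.1
    simpa using φ.injective (by simpa using ha)
  refine ⟨key 0 1 u v (by decide) h, key 1 0 v u (by decide) ?_⟩
  rw [add_comm] at h; exact h

lemma decomp {k : Type*} [Field k] (i : ℕ) (a : FreeAlgebra k (Fin 2))
    (ha : a ∈ deg k 2 (i+1)) :
    ∃ a₁ ∈ deg k 2 i, ∃ a₂ ∈ deg k 2 i,
      a = FreeAlgebra.ι k 0 * a₁ + FreeAlgebra.ι k 1 * a₂ := by
  induction ha using Submodule.span_induction with
  | mem w hw =>
    obtain ⟨f, rfl⟩ := hw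
    have htail : (List.ofFn fun j : Fin i => FreeAlgebra.ι k (f j.succ)).prod ∈ deg k 2 i :=
      Submodule.subset_span ⟨fun j => f j.succ, rfl⟩
    rw [List.ofFn_succ, List.prod_cons]
    match hf0 : f 0 with
    | 0 => exact ⟨_, htail, 0, (deg k 2 i).zero_mem, by simp⟩
    | 1 => exact ⟨0, (deg k 2 i).zero_mem, _, htail, by simp⟩
  | zero => exact ⟨0, (deg k 2 i).zero_mem, 0, (deg k 2 i).zero_mem, by simp⟩
  | add x y _ _ hx hy =>
    obtain ⟨a₁, h₁, a₂, h₂, rfl⟩ := hx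
    obtain ⟨b₁, g₁, b₂, g₂, rfl⟩ := hy
    exact ⟨a₁ + b₁, add_mem h₁ g₁, a₂ + b₂, add_mem h₂ g₂, by noncomm_ring⟩
  | smul c x _ hx =>
    obtain ⟨a₁, h₁, a₂, h₂, rfl⟩ := hx
    exact ⟨c • a₁, Submodule.smul_mem _ c h₁, c • a₂, Submodule.smul_mem _ c h₂, by
      simp [smul_add, mul_smul_comm]⟩

/-- the cochain DG algebra `B(s,t)` on `k⟨x₁,x₂⟩` with
`∂(x₁) = (1+s−st)x₁² + x₁x₂ + x₂x₁ + (1/s)x₂²` and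
`∂(x₂) = sx₁² + x₁x₂ + x₂x₁ + tx₂²`, where `s ≠ 0` and `st ≠ 1`,
has trivial cohomology: `H⁰ = k` and `Hⁱ = 0` for all `i ≥ 1`. -/
theorem stmt13 {k : Type*} [Field k] [CharZero k] (s t : k)
    (hs : s ≠ 0) (hst : s * t ≠ 1)
    (d : FreeAlgebra k (Fin 2) →ₗ[k] FreeAlgebra k (Fin 2))
    (hL : ∀ (p : ℕ) (a b : FreeAlgebra k (Fin 2)), a ∈ deg k 2 p →
      d (a * b) = d a * b + ((-1 : k) ^ p) • (a * d b))
    (h1 : d (FreeAlgebra.ι k 0) =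
      (1 + s - s * t) • (FreeAlgebra.ι k 0 * FreeAlgebra.ι k 0)
        + FreeAlgebra.ι k 0 * FreeAlgebra.ι k 1
        + FreeAlgebra.ι k 1 * FreeAlgebra.ι k 0
        + s⁻¹ • (FreeAlgebra.ι k 1 * FreeAlgebra.ι k 1))
    (h2 : d (FreeAlgebra.ι k 1) =
      s • (FreeAlgebra.ι k 0 * FreeAlgebra.ι k 0)
        + FreeAlgebra.ι k 0 * FreeAlgebra.ι k 1
        + FreeAlgebra.ι k 1 * FreeAlgebra.ι k 0
        + t • (FreeAlgebra.ι k 1 * FreeAlgebra.ι k 1))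
    (hdd : ∀ x, d (d x) = 0) :
    (∀ a ∈ deg k 2 0, d a = 0) ∧
    (∀ i : ℕ, 1 ≤ i → ∀ a ∈ deg k 2 i, d a = 0 →
      ∃ b ∈ deg k 2 (i - 1), d b = a) := by
  set x₀ : FreeAlgebra k (Fin 2) := FreeAlgebra.ι k 0 with hx₀def
  set x₁ : FreeAlgebra k (Fin 2) := FreeAlgebra.ι k 1 with hx₁def
  have h1mem : (1 : FreeAlgebra k (Fin 2)) ∈ deg k 2 0 :=
    Submodule.subset_span ⟨Fin.elim0, by simp⟩
  have hd1 : d 1 = 0 := by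
    have := hL 0 1 1 h1mem
    simp only [one_mul, pow_zero, one_smul, mul_one] at this
    exact (left_eq_add.mp this)
  constructor
  · intro a ha
    induction ha using Submodule.span_induction with
    | mem w hw =>
      obtain ⟨f, rfl⟩ := hw
      simpa using hd1
    | zero => simp
    | add x y _ _ hx hy => rw [map_add, hx, hy, add_zero]
    | smul c x _ hx => rw [map_smul, hx, smul_zero]
  · intro i hi a ha hda
    obtain ⟨m, rfl⟩ : ∃ m, i = m + 1 := ⟨i - 1, by omega⟩
    obtain ⟨a₁, hm₁, a₂, hm₂, hdec⟩ := decomp m a ha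
    have hx0 : x₀ ∈ deg k 2 1 := by
      apply Submodule.subset_span
      exact ⟨fun _ => 0, by simpa using hx₀def⟩
    have hx1 : x₁ ∈ deg k 2 1 := by
      apply Submodule.subset_span
      exact ⟨fun _ => 1, by simpa using hx₁def⟩
    have e1 := hL 1 x₀ a₁ hx0
    have e2 := hL 1 x₁ a₂ hx1
    have E0 : d x₀ * a₁ - x₀ * d a₁ + (d x₁ * a₂ - x₁ * d a₂) = 0 := by
      have h' : d (x₀ * a₁) + d (x₁ * a₂) = 0 := by
        rw [← map_add, ← hdec, hda]
      rw [e1, e2] at h'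
      simpa [pow_one, neg_smul, one_smul, sub_eq_add_neg] using h'
    set P : FreeAlgebra k (Fin 2) :=
      (1 + s - s * t) • (x₀ * a₁) + x₁ * a₁ + s • (x₀ * a₂) + x₁ * a₂ - d a₁ with hPdef
    set Q : FreeAlgebra k (Fin 2) :=
      x₀ * a₁ + s⁻¹ • (x₁ * a₁) + x₀ * a₂ + t • (x₁ * a₂) - d a₂ with hQdef
    have key : x₀ * P + x₁ * Q = 0 := by
      rw [h1, h2] at E0
      rw [← E0, hPdef, hQdef]
      simp only [mul_add, add_mul, mul_sub, sub_mul, smul_mul_assoc, mul_smul_comm, mul_assoc]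
      module
    obtain ⟨hP, hQ⟩ := left_cancel2 P Q key
    have hda₁ : d a₁ = (1 + s - s * t) • (x₀ * a₁) + x₁ * a₁ + s • (x₀ * a₂) + x₁ * a₂ :=
      (sub_eq_zero.mp hP).symm
    have hda₂ : d a₂ = x₀ * a₁ + s⁻¹ • (x₁ * a₁) + x₀ * a₂ + t • (x₁ * a₂) :=
      (sub_eq_zero.mp hQ).symm
    refine ⟨(1 - s * t)⁻¹ • (a₁ - s • a₂), ?_, ?_⟩
    · simpa using Submodule.smul_mem _ _ (sub_mem hm₁ (Submodule.smul_mem _ _ hm₂))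
    · have hcomb : d a₁ - s • d a₂ = (1 - s * t) • a := by
        rw [hda₁, hda₂, hdec]
        match_scalars <;> field_simp <;> ring
      rw [map_smul, map_sub, map_smul, hcomb, smul_smul,
        inv_mul_cancel₀ (sub_ne_zero_of_ne (Ne.symm hst)), one_smul]
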